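/- Let X and Y be nonnegative random variables on a probability space with Y > 0 almost surely, E[Y] > 0, and such that X, Y, 1/Y, 1/(X+Y), log Y and log(X+Y) are all integrable. Then both of the quantities E[log₂(1 + X/Y)] and log₂(1 + E[X]/E[Y]) lie in the closed interval [ log₂(1/E[1/(X+Y)]) − log₂(E[Y]) , log₂(E[X+Y]) − log₂(1/E[1/Y]) ]. -/

import Mathlib

open MeasureTheory Filter

lemma my_integral_pos {Ω : Type*} [MeasurableSpace Ω] (μ : Measure Ω) [IsProbabilityMeasure μ]
    (W : Ω → ℝ) (hW : ∀ᵐ ω ∂μ, 0 < W ω) (hint : Integrable W μ) :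
    0 < ∫ ω, W ω ∂μ := by
  rw [integral_pos_iff_support_of_nonneg_ae (hW.mono fun ω h => le_of_lt h) hint]
  have h0 : μ (Function.support W)ᶜ = 0 := by
    apply measure_mono_null _ (ae_iff.mp hW)
    intro ω hω
    simp only [Function.mem_support, Set.mem_compl_iff, not_not] at hω
    simp [hω]
  by_contra h
  push_neg at h
  have hs : μ (Function.support W) = 0 := le_antisymm h zero_le
  have : μ Set.univ = 0 := by
    have := measure_union_le (μ := μ) (Function.support W) (Function.support W)ᶜ
    rw [Set.union_compl_self, hs, h0] at this
    simpa using this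
  simp [measure_univ] at this

lemma my_jensen_log {Ω : Type*} [MeasurableSpace Ω] (μ : Measure Ω) [IsProbabilityMeasure μ]
    (W : Ω → ℝ) (hW : ∀ᵐ ω ∂μ, 0 < W ω) (hint : Integrable W μ)
    (hlog : Integrable (fun ω => Real.log (W ω)) μ) :
    ∫ ω, Real.log (W ω) ∂μ ≤ Real.log (∫ ω, W ω ∂μ) := by
  set c := ∫ ω, W ω ∂μ with hc
  have hcpos : 0 < c := my_integral_pos μ W hW hint
  have hbound : ∀ᵐ ω ∂μ, Real.log (W ω) ≤ Real.log c + (W ω - c) / c := by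
    filter_upwards [hW] with ω hω
    have h1 : Real.log (W ω / c) ≤ W ω / c - 1 := Real.log_le_sub_one_of_pos (div_pos hω hcpos)
    rw [Real.log_div (ne_of_gt hω) (ne_of_gt hcpos)] at h1
    have : W ω / c - 1 = (W ω - c) / c := by field_simp
    linarith [this ▸ h1]
  have hg : Integrable (fun ω => (W ω - c) / c) μ := by
    exact (hint.sub (integrable_const c)).div_const c
  have hint2 : Integrable (fun ω => Real.log c + (W ω - c) / c) μ :=
    (integrable_const _).add hg
  have := integral_mono_ae hlog hint2 hbound
  have hgsub : Integrable (fun ω => W ω - c) μ := by exact hint.sub (integrable_const c)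
  calc ∫ ω, Real.log (W ω) ∂μ ≤ ∫ ω, (Real.log c + (W ω - c) / c) ∂μ := this
    _ = Real.log c := by
        rw [integral_add (integrable_const _) hg, integral_const, integral_div,
          integral_sub hint (integrable_const _), integral_const]
        simp [← hc]

lemma my_jensen_inv {Ω : Type*} [MeasurableSpace Ω] (μ : Measure Ω) [IsProbabilityMeasure μ]
    (W : Ω → ℝ) (hW : ∀ᵐ ω ∂μ, 0 < W ω) (hint : Integrable W μ)
    (hinv : Integrable (fun ω => (W ω)⁻¹) μ) :
    (∫ ω, W ω ∂μ)⁻¹ ≤ ∫ ω, (W ω)⁻¹ ∂μ := by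
  set c := ∫ ω, W ω ∂μ with hc
  have hcpos : 0 < c := my_integral_pos μ W hW hint
  have hbound : ∀ᵐ ω ∂μ, 2 / c - W ω / c ^ 2 ≤ (W ω)⁻¹ := by
    filter_upwards [hW] with ω hω
    rw [div_sub_div _ _ (ne_of_gt hcpos) (by positivity), div_le_iff₀ (by positivity)]
    rw [inv_mul_eq_div, le_div_iff₀ hω] at *
    nlinarith [sq_nonneg (W ω - c)]
  have hd : Integrable (fun ω => W ω / c ^ 2) μ := by exact hint.div_const _
  have hint2 : Integrable (fun ω => 2 / c - W ω / c ^ 2) μ := (integrable_const _).sub hd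
  have := integral_mono_ae hint2 hinv hbound
  calc c⁻¹ = ∫ ω, (2 / c - W ω / c ^ 2) ∂μ := by
        rw [integral_sub (integrable_const _) hd, integral_const, integral_div]
        simp only [measure_univ, probReal_univ, one_smul, ← hc]
        field_simp
        ring
    _ ≤ _ := this

/-- (Paper's Lemma 1.) For nonnegative integrable random variables `X, Y`
with `Y > 0` a.s., `E[Y] > 0`, and with `1/Y`, `1/(X+Y)`, `log Y`, `log (X+Y)` integrable,
both `E[log₂(1 + X/Y)]` and `log₂(1 + E[X]/E[Y])` lie in the interval
`[log₂(1/E[1/(X+Y)]) − log₂(E[Y]), log₂(E[X+Y]) − log₂(1/E[1/Y])]`. -/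
theorem log_ratio_expectation_bounds
    {Ω : Type*} [MeasurableSpace Ω] (μ : Measure Ω) [IsProbabilityMeasure μ]
    (X Y : Ω → ℝ)
    (hX0 : ∀ᵐ ω ∂μ, 0 ≤ X ω) (hY0 : ∀ᵐ ω ∂μ, 0 < Y ω)
    (hEY : 0 < ∫ ω, Y ω ∂μ)
    (hXint : Integrable X μ) (hYint : Integrable Y μ)
    (hinvY : Integrable (fun ω => (Y ω)⁻¹) μ)
    (hinvXY : Integrable (fun ω => (X ω + Y ω)⁻¹) μ)
    (hlogY : Integrable (fun ω => Real.log (Y ω)) μ)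
    (hlogXY : Integrable (fun ω => Real.log (X ω + Y ω)) μ) :
    (∫ ω, Real.logb 2 (1 + X ω / Y ω) ∂μ) ∈
      Set.Icc
        (Real.logb 2 (1 / ∫ ω, (X ω + Y ω)⁻¹ ∂μ) - Real.logb 2 (∫ ω, Y ω ∂μ))
        (Real.logb 2 (∫ ω, (X ω + Y ω) ∂μ) - Real.logb 2 (1 / ∫ ω, (Y ω)⁻¹ ∂μ)) ∧
    Real.logb 2 (1 + (∫ ω, X ω ∂μ) / (∫ ω, Y ω ∂μ)) ∈
      Set.Icc
        (Real.logb 2 (1 / ∫ ω, (X ω + Y ω)⁻¹ ∂μ) - Real.logb 2 (∫ ω, Y ω ∂μ))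
        (Real.logb 2 (∫ ω, (X ω + Y ω) ∂μ) - Real.logb 2 (1 / ∫ ω, (Y ω)⁻¹ ∂μ)) := by
  have hZ0 : ∀ᵐ ω ∂μ, 0 < X ω + Y ω := by
    filter_upwards [hX0, hY0] with ω h1 h2; linarith
  have hZint : Integrable (fun ω => X ω + Y ω) μ := hXint.add hYint
  have hIZ0 : ∀ᵐ ω ∂μ, 0 < (X ω + Y ω)⁻¹ := hZ0.mono fun ω h => inv_pos.mpr h
  have hIY0 : ∀ᵐ ω ∂μ, 0 < (Y ω)⁻¹ := hY0.mono fun ω h => inv_pos.mpr h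
  have hEZ : 0 < ∫ ω, (X ω + Y ω) ∂μ := my_integral_pos μ _ hZ0 hZint
  have hEIZ : 0 < ∫ ω, (X ω + Y ω)⁻¹ ∂μ := my_integral_pos μ _ hIZ0 hinvXY
  have hEIY : 0 < ∫ ω, (Y ω)⁻¹ ∂μ := my_integral_pos μ _ hIY0 hinvY
  have hL2 : 0 < Real.log 2 := Real.log_pos one_lt_two
  -- Jensen facts
  have jZ : ∫ ω, Real.log (X ω + Y ω) ∂μ ≤ Real.log (∫ ω, (X ω + Y ω) ∂μ) :=
    my_jensen_log μ _ hZ0 hZint hlogXY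
  have jY : ∫ ω, Real.log (Y ω) ∂μ ≤ Real.log (∫ ω, Y ω ∂μ) :=
    my_jensen_log μ _ hY0 hYint hlogY
  have jZ' : -Real.log (∫ ω, (X ω + Y ω)⁻¹ ∂μ) ≤ ∫ ω, Real.log (X ω + Y ω) ∂μ := by
    have h := my_jensen_log μ (fun ω => (X ω + Y ω)⁻¹) hIZ0 hinvXY
      (by simp only [Real.log_inv]; exact hlogXY.neg)
    simp only [Real.log_inv, integral_neg] at h
    linarith
  have jY' : -Real.log (∫ ω, (Y ω)⁻¹ ∂μ) ≤ ∫ ω, Real.log (Y ω) ∂μ := by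
    have h := my_jensen_log μ (fun ω => (Y ω)⁻¹) hIY0 hinvY
      (by simp only [Real.log_inv]; exact hlogY.neg)
    simp only [Real.log_inv, integral_neg] at h
    linarith
  have jIZ : (∫ ω, (X ω + Y ω) ∂μ)⁻¹ ≤ ∫ ω, (X ω + Y ω)⁻¹ ∂μ :=
    my_jensen_inv μ _ hZ0 hZint hinvXY
  have jIY : (∫ ω, Y ω ∂μ)⁻¹ ≤ ∫ ω, (Y ω)⁻¹ ∂μ := my_jensen_inv μ _ hY0 hYint hinvY
  have hinvZle : (∫ ω, (X ω + Y ω)⁻¹ ∂μ)⁻¹ ≤ ∫ ω, (X ω + Y ω) ∂μ := by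
    have := inv_anti₀ (inv_pos.mpr hEZ) jIZ
    simpa using this
  have hinvYle : (∫ ω, (Y ω)⁻¹ ∂μ)⁻¹ ≤ ∫ ω, Y ω ∂μ := by
    have := inv_anti₀ (inv_pos.mpr hEY) jIY
    simpa using this
  -- key identity
  have hId : ∫ ω, Real.logb 2 (1 + X ω / Y ω) ∂μ =
      ((∫ ω, Real.log (X ω + Y ω) ∂μ) - ∫ ω, Real.log (Y ω) ∂μ) / Real.log 2 := by
    have hae : ∀ᵐ ω ∂μ, Real.logb 2 (1 + X ω / Y ω) =
        (Real.log (X ω + Y ω) - Real.log (Y ω)) / Real.log 2 := by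
      filter_upwards [hX0, hY0] with ω h1 h2
      have hzy : 1 + X ω / Y ω = (X ω + Y ω) / Y ω := by field_simp; ring
      rw [hzy, ← Real.log_div_log, Real.log_div (by positivity) (ne_of_gt h2)]
    rw [integral_congr_ae hae, integral_div, integral_sub hlogXY hlogY]
  refine ⟨⟨?_, ?_⟩, ?_, ?_⟩
  · rw [hId]
    simp only [one_div, ← Real.log_div_log, Real.log_inv]
    rw [← sub_div, div_le_div_iff_of_pos_right hL2]
    linarith
  · rw [hId]
    simp only [one_div, ← Real.log_div_log, Real.log_inv]
    rw [← sub_div, div_le_div_iff_of_pos_right hL2]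
    linarith
  · have h1x : 1 + (∫ ω, X ω ∂μ) / (∫ ω, Y ω ∂μ) =
        (∫ ω, (X ω + Y ω) ∂μ) / (∫ ω, Y ω ∂μ) := by
      rw [integral_add hXint hYint]; field_simp; ring
    rw [h1x, Real.logb_div (ne_of_gt hEZ) (ne_of_gt hEY), one_div]
    have : Real.logb 2 (∫ ω, (X ω + Y ω)⁻¹ ∂μ)⁻¹ ≤ Real.logb 2 (∫ ω, (X ω + Y ω) ∂μ) :=
      Real.logb_le_logb_of_le one_lt_two (inv_pos.mpr hEIZ) hinvZle
    linarith
  · have h1x : 1 + (∫ ω, X ω ∂μ) / (∫ ω, Y ω ∂μ) =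
        (∫ ω, (X ω + Y ω) ∂μ) / (∫ ω, Y ω ∂μ) := by
      rw [integral_add hXint hYint]; field_simp; ring
    rw [h1x, Real.logb_div (ne_of_gt hEZ) (ne_of_gt hEY), one_div]
    have : Real.logb 2 (∫ ω, (Y ω)⁻¹ ∂μ)⁻¹ ≤ Real.logb 2 (∫ ω, Y ω ∂μ) :=
      Real.logb_le_logb_of_le one_lt_two (inv_pos.mpr hEIY) hinvYle
    linarith
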